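/- Let m ≤ n with m even, n odd, and suppose f is an SEDF of K_{m,n} with bipartition (X, Y), |X| = m, |Y| = n, such that some vertex u ∈ X has s_u ≤ 1. Then Σ_{e ∈ E(K_{m,n})} f(e) ≥ n + 1. -/
import Mathlib


open scoped Classical

noncomputable def edgeFin {V : Type*} [Fintype V] (G : SimpleGraph V) : Finset (Sym2 V) :=
  Finset.univ.filter (· ∈ G.edgeSet)

noncomputable def closedNbhd {V : Type*} [Fintype V] (G : SimpleGraph V) (e : Sym2 V) :
    Finset (Sym2 V) :=
  (edgeFin G).filter (fun e' => ∃ v, v ∈ e ∧ v ∈ e')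

def IsSEDF {V : Type*} [Fintype V] (G : SimpleGraph V) (f : Sym2 V → ℤ) : Prop :=
  (∀ e ∈ edgeFin G, f e = 1 ∨ f e = -1) ∧
  ∀ e ∈ edgeFin G, 1 ≤ ∑ e' ∈ closedNbhd G e, f e'

noncomputable def vsum {V : Type*} [Fintype V] (G : SimpleGraph V) (f : Sym2 V → ℤ) (v : V) : ℤ :=
  ∑ e ∈ (edgeFin G).filter (fun e => v ∈ e), f e

noncomputable def gammaS {V : Type*} [Fintype V] (G : SimpleGraph V) : ℤ :=
  sInf {z : ℤ | ∃ f, IsSEDF G f ∧ z = ∑ e ∈ edgeFin G, f e}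

def IsLGraph {V : Type*} [Fintype V] (m n : ℕ) (G : SimpleGraph V) : Prop :=
  Fintype.card V = (n + 1) * (m * n + m + 1) ∧
  ∃ P : Fin (n + 1) → Finset V,
    (∀ v : V, ∃! i, v ∈ P i) ∧
    (∀ i, (P i).card = m * n + m + 1) ∧
    (∀ u ∈ P 0, ∀ v ∈ P 0, u ≠ v → G.Adj u v) ∧
    (∀ i, i ≠ 0 → ∀ u ∈ P i, ∀ v ∈ P i, ¬ G.Adj u v) ∧
    (∀ i, i ≠ 0 → ∀ v ∈ P i, ((P 0).filter (G.Adj v)).card = m) ∧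
    (∀ i, i ≠ 0 → ∀ v ∈ P 0, ((P i).filter (G.Adj v)).card = m) ∧
    (∀ i j, i ≠ 0 → j ≠ 0 → i ≠ j → ∀ u ∈ P i, ∀ v ∈ P j, ¬ G.Adj u v)

def MConnected {V : Type*} [Fintype V] (m : ℕ) (G : SimpleGraph V) : Prop :=
  m < Fintype.card V ∧
  ∀ S : Finset V, S.card < m → (G.induce ((↑S : Set V)ᶜ)).Connected

def IsElementary {V : Type*} (H : SimpleGraph V) : Prop :=
  (∀ v, (H.neighborSet v).ncard ≤ 2) ∧
  ∀ v, (H.neighborSet v).ncard = 1 → ∀ w, H.Adj v w → (H.neighborSet w).ncard = 1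

namespace Stmt18Aux

variable {m n : ℕ}

noncomputable def φ {m n : ℕ} (p : Fin m × Fin n) : Sym2 (Fin m ⊕ Fin n) :=
  s(Sum.inl p.1, Sum.inr p.2)

lemma φ_inj : Function.Injective (φ (m := m) (n := n)) := by
  rintro ⟨x, y⟩ ⟨x', y'⟩ h
  simp only [φ, Sym2.eq, Sym2.rel_iff', Prod.mk.injEq, Prod.swap_prod_mk] at h
  rcases h with ⟨h1, h2⟩ | ⟨h1, h2⟩ <;> simp_all

lemma edgeFin_eq :
    edgeFin (completeBipartiteGraph (Fin m) (Fin n)) = Finset.univ.image φ := by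
  ext e
  induction e using Sym2.ind with
  | _ a b =>
    simp only [edgeFin, Finset.mem_filter, Finset.mem_univ, true_and, Finset.mem_image,
      SimpleGraph.mem_edgeSet, completeBipartiteGraph_adj]
    constructor
    · rintro (⟨ha, hb⟩ | ⟨ha, hb⟩)
      · rcases a with x | y
        · rcases b with x' | y'
          · simp at hb
          · exact ⟨(x, y'), rfl⟩
        · simp at ha
      · rcases a with x | y
        · simp at ha
        · rcases b with x' | y'
          · exact ⟨(x', y), Sym2.eq_swap⟩
          · simp at hb
    · rintro ⟨⟨x, y⟩, h⟩
      simp only [φ, Sym2.eq, Sym2.rel_iff', Prod.mk.injEq, Prod.swap_prod_mk] at h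
      rcases h with ⟨h1, h2⟩ | ⟨h1, h2⟩ <;> subst h1 <;> subst h2 <;> simp

lemma sum_filter_image (f : Sym2 (Fin m ⊕ Fin n) → ℤ) (P : Sym2 (Fin m ⊕ Fin n) → Prop) [DecidablePred P] :
    ∑ e ∈ (edgeFin (completeBipartiteGraph (Fin m) (Fin n))).filter P, f e
      = ∑ p ∈ Finset.univ.filter (fun p => P (φ p)), f (φ p) := by
  rw [edgeFin_eq, Finset.filter_image, Finset.sum_image (fun a _ b _ h => φ_inj h)]

lemma vsum_inl (f : Sym2 (Fin m ⊕ Fin n) → ℤ) (x : Fin m) :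
    vsum (completeBipartiteGraph (Fin m) (Fin n)) f (Sum.inl x)
      = ∑ y : Fin n, f (φ (x, y)) := by
  rw [vsum, sum_filter_image]
  rw [Finset.sum_filter, Fintype.sum_prod_type]
  simp [φ, eq_comm]

lemma vsum_inr (f : Sym2 (Fin m ⊕ Fin n) → ℤ) (y : Fin n) :
    vsum (completeBipartiteGraph (Fin m) (Fin n)) f (Sum.inr y)
      = ∑ x : Fin m, f (φ (x, y)) := by
  rw [vsum, sum_filter_image]
  rw [Finset.sum_filter, Fintype.sum_prod_type]
  simp [φ, eq_comm]

lemma sum_fst (f : Sym2 (Fin m ⊕ Fin n) → ℤ) (u : Fin m) :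
    ∑ p ∈ Finset.univ.filter (fun p : Fin m × Fin n => p.1 = u), f (φ p)
      = ∑ y : Fin n, f (φ (u, y)) := by
  rw [Finset.sum_filter, Fintype.sum_prod_type]
  simp [eq_comm]

lemma sum_snd (f : Sym2 (Fin m ⊕ Fin n) → ℤ) (y : Fin n) :
    ∑ p ∈ Finset.univ.filter (fun p : Fin m × Fin n => p.2 = y), f (φ p)
      = ∑ x : Fin m, f (φ (x, y)) := by
  rw [Finset.sum_filter, Fintype.sum_prod_type]
  simp [eq_comm]

lemma closedNbhd_sum (f : Sym2 (Fin m ⊕ Fin n) → ℤ) (u : Fin m) (y : Fin n) :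
    ∑ e ∈ closedNbhd (completeBipartiteGraph (Fin m) (Fin n)) (φ (u, y)), f e
      = vsum (completeBipartiteGraph (Fin m) (Fin n)) f (Sum.inl u)
        + vsum (completeBipartiteGraph (Fin m) (Fin n)) f (Sum.inr y) - f (φ (u, y)) := by
  rw [closedNbhd, sum_filter_image]
  have hiff : ∀ p : Fin m × Fin n, (∃ v, v ∈ φ (u, y) ∧ v ∈ φ p) ↔ (p.1 = u ∨ p.2 = y) := by
    rintro ⟨x, y'⟩
    simp only [φ, Sym2.mem_iff]
    constructor
    · rintro ⟨v, (rfl | rfl), (h | h)⟩ <;> simp_all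
    · rintro (rfl | rfl)
      · exact ⟨Sum.inl x, Or.inl rfl, Or.inl rfl⟩
      · exact ⟨Sum.inr y', Or.inr rfl, Or.inr rfl⟩
  have hinter : (Finset.univ.filter (fun p : Fin m × Fin n => p.1 = u))
      ∩ Finset.univ.filter (fun p : Fin m × Fin n => p.2 = y) = {(u, y)} := by
    ext ⟨x, y'⟩
    simp [Prod.ext_iff]
  rw [Finset.sum_filter]
  simp only [hiff]
  rw [← Finset.sum_filter, Finset.filter_or]
  rw [vsum_inl, vsum_inr, ← sum_fst f u, ← sum_snd f y]
  have := Finset.sum_union_inter (s₁ := Finset.univ.filter (fun p : Fin m × Fin n => p.1 = u))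
    (s₂ := Finset.univ.filter (fun p : Fin m × Fin n => p.2 = y)) (f := fun p => f (φ p))
  rw [hinter] at this
  simp only [Finset.sum_singleton] at this
  linarith

lemma parity_sum {α : Type*} (s : Finset α) (g : α → ℤ) (h : ∀ i ∈ s, g i = 1 ∨ g i = -1) :
    ((∑ i ∈ s, g i : ℤ) : ZMod 2) = (s.card : ZMod 2) := by
  push_cast
  rw [Finset.sum_congr rfl (g := fun _ => (1 : ZMod 2))
    (fun i hi => by beta_reduce; rcases h i hi with h' | h' <;> rw [h'] <;> decide)]
  simp

end Stmt18Aux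

theorem stmt18 (m n : ℕ) (hmn : m ≤ n) (hm : Even m) (hn : Odd n)
    (f : Sym2 (Fin m ⊕ Fin n) → ℤ)
    (hf : IsSEDF (completeBipartiteGraph (Fin m) (Fin n)) f)
    (u : Fin m) (hu : vsum (completeBipartiteGraph (Fin m) (Fin n)) f (Sum.inl u) ≤ 1) :
    (n : ℤ) + 1 ≤ ∑ e ∈ edgeFin (completeBipartiteGraph (Fin m) (Fin n)), f e := by
  open Stmt18Aux in
  obtain ⟨hpm, hsedf⟩ := hf
  have hedge : ∀ p : Fin m × Fin n, φ p ∈ edgeFin (completeBipartiteGraph (Fin m) (Fin n)) := by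
    intro p; rw [Stmt18Aux.edgeFin_eq]; exact Finset.mem_image_of_mem _ (Finset.mem_univ p)
  have hval : ∀ p : Fin m × Fin n, f (φ p) = 1 ∨ f (φ p) = -1 := fun p => hpm _ (hedge p)
  set S := vsum (completeBipartiteGraph (Fin m) (Fin n)) f (Sum.inl u) with hS
  -- S is odd
  have hScast : ((S : ℤ) : ZMod 2) = 1 := by
    rw [hS, vsum_inl, parity_sum _ _ (fun y _ => hval (u, y))]
    simp only [Finset.card_univ, Fintype.card_fin]
    rw [← ZMod.natCast_mod n 2, Nat.odd_iff.mp hn]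
    rfl
  have hSodd : ∃ k : ℤ, S = 2 * k + 1 := by
    have : (((S - 1 : ℤ)) : ZMod 2) = 0 := by push_cast [hScast]; ring
    obtain ⟨k, hk⟩ := (ZMod.intCast_zmod_eq_zero_iff_dvd _ 2).mp this
    exact ⟨k, by omega⟩
  -- each s_y is even
  have hyeven : ∀ y : Fin n, ∃ k : ℤ,
      vsum (completeBipartiteGraph (Fin m) (Fin n)) f (Sum.inr y) = 2 * k := by
    intro y
    have hc : ((vsum (completeBipartiteGraph (Fin m) (Fin n)) f (Sum.inr y) : ℤ) : ZMod 2) = 0 := by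
      rw [vsum_inr, parity_sum _ _ (fun x _ => hval (x, y))]
      simp only [Finset.card_univ, Fintype.card_fin]
      rw [← ZMod.natCast_mod m 2, Nat.even_iff.mp hm]
      rfl
    obtain ⟨k, hk⟩ := (ZMod.intCast_zmod_eq_zero_iff_dvd _ 2).mp hc
    exact ⟨k, by omega⟩
  -- key pointwise bound
  have hstep : ∀ y : Fin n,
      2 - S + f (φ (u, y)) ≤ vsum (completeBipartiteGraph (Fin m) (Fin n)) f (Sum.inr y) := by
    intro y
    have hkey := hsedf (φ (u, y)) (hedge (u, y))
    rw [closedNbhd_sum] at hkey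
    obtain ⟨k, hk⟩ := hSodd
    obtain ⟨k', hk'⟩ := hyeven y
    rcases hval (u, y) with h | h <;> omega
  -- total sum
  have htotal : ∑ e ∈ edgeFin (completeBipartiteGraph (Fin m) (Fin n)), f e
      = ∑ y : Fin n, vsum (completeBipartiteGraph (Fin m) (Fin n)) f (Sum.inr y) := by
    rw [Stmt18Aux.edgeFin_eq, Finset.sum_image (fun a _ b _ h => φ_inj h)]
    rw [Fintype.sum_prod_type_right]
    exact Finset.sum_congr rfl (fun y _ => (vsum_inr f y).symm)
  have hlow : ∑ y : Fin n, (2 - S + f (φ (u, y)))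
      ≤ ∑ y : Fin n, vsum (completeBipartiteGraph (Fin m) (Fin n)) f (Sum.inr y) :=
    Finset.sum_le_sum (fun y _ => hstep y)
  have hsum2 : ∑ y : Fin n, (2 - S + f (φ (u, y))) = n * (2 - S) + S := by
    rw [Finset.sum_add_distrib, Finset.sum_const, ← vsum_inl f u, ← hS]
    simp [mul_comm]
  have hn1 : (1 : ℤ) ≤ n := by
    have := hn.pos
    exact_mod_cast this
  rw [htotal]
  have h1 : (0:ℤ) ≤ (n - 1) * (1 - S) :=
    mul_nonneg (by linarith) (by linarith)
  nlinarith [hlow, hsum2]
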